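/- arXiv:1108.6001 — 3 statements merged into one kernel-verified Lean document; each statement's English description precedes it below -/
import Mathlib

section
/- Fix n, and natural numbers a, b with a ≥ 1 and m := n − a − b ≥ 1. The number of sequences S of length n over {0,1,*} with exactly a zeros, b ones and m stars, such that no 1 occurs to the right of the rightmost * and at least one 0 occurs to the left of the leftmost *, equals Σ_{c=0}^{b} C(n−1−c, a−1)·C(m−1+b−c, m−1). -/
open Finset

def cnt {n : ℕ} (S : Fin n → Fin 3) (v : Fin 3) : ℕ :=
  (Finset.univ.filter fun i => S i = v).card

def cond4 {n : ℕ} (S : Fin n → Fin 3) : Prop :=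
  ∀ q, S q = 1 → ∃ r, q < r ∧ S r = 2

def cond5 {n : ℕ} (S : Fin n → Fin 3) : Prop :=
  ∃ p, S p = 0 ∧ ∀ r, r ≤ p → S r ≠ 2

instance {n} (S : Fin n → Fin 3) : Decidable (cond4 S) := by unfold cond4; infer_instance
instance {n} (S : Fin n → Fin 3) : Decidable (cond5 S) := by unfold cond5; infer_instance

lemma cnt_cons {n} (x : Fin 3) (S : Fin n → Fin 3) (v : Fin 3) :
    cnt (Fin.cons x S) v = (if x = v then 1 else 0) + cnt S v := by
  unfold cnt
  rw [Finset.card_filter, Finset.card_filter, Fin.sum_univ_succ]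
  simp

lemma exists_of_cnt {n} (S : Fin n → Fin 3) (v : Fin 3) (h : 1 ≤ cnt S v) : ∃ r, S r = v := by
  unfold cnt at h
  obtain ⟨r, hr⟩ := Finset.card_pos.mp h
  exact ⟨r, (Finset.mem_filter.mp hr).2⟩

lemma cnt_total {n} (S : Fin n → Fin 3) : cnt S 0 + cnt S 1 + cnt S 2 = n := by
  unfold cnt
  rw [Finset.card_filter, Finset.card_filter, Finset.card_filter, ← Finset.sum_add_distrib,
    ← Finset.sum_add_distrib]
  have key : ∀ v : Fin 3,
      ((if v = 0 then 1 else 0) + (if v = 1 then 1 else 0)) + (if v = 2 then 1 else 0) = 1 := by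
    decide
  calc (∑ i : Fin n, (((if S i = 0 then 1 else 0) + if S i = 1 then 1 else 0) + if S i = 2 then 1 else 0))
      = ∑ _i : Fin n, 1 := Finset.sum_congr rfl fun i _ => key (S i)
    _ = n := by simp

lemma cond4_cons {n} (x : Fin 3) (S : Fin n → Fin 3) :
    cond4 (Fin.cons x S) ↔ ((x = 1 → ∃ r, S r = 2) ∧ cond4 S) := by
  unfold cond4
  rw [Fin.forall_fin_succ]
  simp only [Fin.cons_zero, Fin.cons_succ]
  constructor
  · rintro ⟨h0, hs⟩
    refine ⟨fun hx => ?_, fun q hq => ?_⟩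
    · obtain ⟨r, hr0, hr2⟩ := h0 hx
      rcases Fin.eq_zero_or_eq_succ r with rfl | ⟨j, rfl⟩
      · exact absurd hr0 (lt_irrefl _)
      · exact ⟨j, by simpa using hr2⟩
    · obtain ⟨r, hrlt, hr2⟩ := hs q hq
      rcases Fin.eq_zero_or_eq_succ r with rfl | ⟨j, rfl⟩
      · exact absurd hrlt (by simp)
      · exact ⟨j, Fin.succ_lt_succ_iff.mp hrlt, by simpa using hr2⟩
  · rintro ⟨h1, h4⟩
    constructor
    · intro hx
      obtain ⟨r, hr⟩ := h1 hx
      exact ⟨r.succ, Fin.succ_pos r, by simpa using hr⟩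
    · intro q hq
      obtain ⟨r, hlt, hr⟩ := h4 q hq
      exact ⟨r.succ, Fin.succ_lt_succ_iff.mpr hlt, by simpa using hr⟩

lemma cond5_cons {n} (x : Fin 3) (S : Fin n → Fin 3) :
    cond5 (Fin.cons x S) ↔ (x = 0 ∨ (x ≠ 2 ∧ cond5 S)) := by
  unfold cond5
  rw [Fin.exists_fin_succ]
  simp only [Fin.cons_zero, Fin.cons_succ]
  constructor
  · rintro (⟨hx, -⟩ | ⟨p, hp0, hpr⟩)
    · exact Or.inl hx
    · refine Or.inr ⟨hpr 0 (Fin.zero_le _), ⟨p, hp0, fun r hr => ?_⟩⟩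
      exact hpr r.succ (Fin.succ_le_succ_iff.mpr hr)
  · rintro (hx | ⟨hx2, p, hp0, hpr⟩)
    · refine Or.inl ⟨hx, fun r hr => ?_⟩
      have h0 : r = 0 := Fin.le_zero_iff.mp hr
      subst h0
      rw [Fin.cons_zero, hx]
      decide
    · refine Or.inr ⟨p, hp0, fun r hr => ?_⟩
      rcases Fin.eq_zero_or_eq_succ r with rfl | ⟨j, rfl⟩
      · simpa using hx2
      · simpa using hpr j (Fin.succ_le_succ_iff.mp hr)

lemma card_pi_succ {n : ℕ} (p : (Fin (n + 1) → Fin 3) → Prop) [DecidablePred p] :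
    (univ.filter p).card
      = ∑ x : Fin 3, (univ.filter fun S : Fin n → Fin 3 => p (Fin.cons x S)).card := by
  calc (univ.filter p).card
      = ∑ f : Fin (n + 1) → Fin 3, if p f then 1 else 0 := by
        rw [Finset.card_filter]
    _ = ∑ q : Fin 3 × (Fin n → Fin 3), if p (Fin.cons q.1 q.2) then 1 else 0 := by
        refine (Fintype.sum_equiv (Fin.consEquiv fun _ => Fin 3) _ _ fun q => ?_).symm
        simp [Fin.consEquiv]; rfl
    _ = ∑ x : Fin 3, ∑ S : Fin n → Fin 3, if p (Fin.cons x S) then 1 else 0 :=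
        Fintype.sum_prod_type _
    _ = _ := Finset.sum_congr rfl fun x _ => (Finset.card_filter _ _).symm

lemma G0 (n a b : ℕ) :
    (univ.filter fun S : Fin n → Fin 3 =>
        cnt S 0 = a ∧ cnt S 1 = b ∧ cnt S 2 = 0 ∧ cond4 S).card
      = if a = n ∧ b = 0 then 1 else 0 := by
  split_ifs with h
  · obtain ⟨rfl, rfl⟩ := h
    rw [Finset.card_eq_one]
    refine ⟨fun _ => 0, ?_⟩
    ext S
    simp only [mem_filter, mem_univ, true_and, mem_singleton]
    constructor
    · rintro ⟨h0, h1, h2, -⟩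
      funext i
      have hne1 : S i ≠ 1 := by
        intro hv
        have hm : i ∈ univ.filter fun j => S j = 1 := by simp [hv]
        have : (univ.filter fun j => S j = (1 : Fin 3)).card = 0 := h1
        rw [Finset.card_eq_zero] at this
        simp [this] at hm
      have hne2 : S i ≠ 2 := by
        intro hv
        have hm : i ∈ univ.filter fun j => S j = 2 := by simp [hv]
        have : (univ.filter fun j => S j = (2 : Fin 3)).card = 0 := h2
        rw [Finset.card_eq_zero] at this
        simp [this] at hm
      have : ∀ v : Fin 3, v ≠ 1 → v ≠ 2 → v = 0 := by decide
      exact this (S i) hne1 hne2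
    · rintro rfl
      refine ⟨?_, ?_, ?_, ?_⟩
      · simp [cnt]
      · simp [cnt]
      · simp [cnt]
      · intro q hq
        exfalso
        exact absurd hq (by norm_num)
  · rw [Finset.card_eq_zero, Finset.filter_eq_empty_iff]
    rintro S - ⟨h0, h1, h2, h4⟩
    have htot := cnt_total S
    rcases Nat.eq_zero_or_pos b with rfl | hb
    · omega
    · obtain ⟨q, hq⟩ := exists_of_cnt S 1 (by omega)
      obtain ⟨r, -, hr⟩ := h4 q hq
      have hmem : r ∈ univ.filter fun j => S j = 2 := by simp [hr]
      have : 1 ≤ cnt S 2 := Finset.card_pos.mpr ⟨r, hmem⟩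
      omega

lemma pascal2 (n a b m : ℕ) (h : a + b + m = n + 1) (hm : 1 ≤ m) :
    (if a = 0 then 0 else n.choose (a - 1) * (m - 1 + b).choose b)
    + (if b = 0 then 0 else n.choose a * (m - 1 + (b - 1)).choose (b - 1))
    + (if m - 1 = 0 then (if a = n ∧ b = 0 then 1 else 0)
        else n.choose a * (m - 1 - 1 + b).choose b)
    = (n + 1).choose a * (m - 1 + b).choose b := by
  obtain ⟨m, rfl⟩ : ∃ m', m = m' + 1 := ⟨m - 1, by omega⟩
  simp only [Nat.add_sub_cancel]
  rcases a with _ | a <;> rcases b with _ | b <;> rcases m with _ | m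
  · -- a=0 b=0 m'=0 : n = 0
    have hn : n = 0 := by omega
    subst hn; simp
  · simp
  · simp [Nat.choose_succ_succ]
  · -- a=0 b=t+1 m'=s+1
    have key : (m + 1 + (b + 1)).choose (b + 1)
        = (m + 1 + b).choose b + (m + (b + 1)).choose (b + 1) := by
      rw [show m + 1 + (b + 1) = (m + (b + 1)) + 1 from by ring]
      rw [Nat.choose_succ_succ]
      rw [show m + (b + 1) = m + 1 + b from by ring]
    simp only [Nat.succ_sub_one, Nat.choose_zero_right, one_mul,
      if_neg (Nat.succ_ne_zero _), eq_self_iff_true, if_true, key]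
    omega
  · -- a=u+1 b=0 m'=0 : n = a
    have hn : n = a + 1 := by omega
    subst hn
    simp [Nat.choose_succ_succ, Nat.choose_self, Nat.choose_succ_self_right]
  · -- a=u+1 b=0 m'=s+1
    simp [Nat.choose_succ_succ (n) a, Nat.succ_sub_one, Nat.choose_succ_succ n (a+1)]
  · -- a=u+1 b=t+1 m'=0
    simp only [Nat.succ_sub_one, Nat.zero_add, if_neg (Nat.succ_ne_zero _), if_pos rfl]
    simp [Nat.choose_succ_succ n a, Nat.choose_self]
  · -- a=u+1 b=t+1 m'=s+1
    have key : (m + 1 + (b + 1)).choose (b + 1)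
        = (m + 1 + b).choose b + (m + (b + 1)).choose (b + 1) := by
      rw [show m + 1 + (b + 1) = (m + (b + 1)) + 1 from by ring]
      rw [Nat.choose_succ_succ]
      rw [show m + (b + 1) = m + 1 + b from by ring]
    simp only [Nat.succ_sub_one, if_neg (Nat.succ_ne_zero _), key,
      Nat.choose_succ_succ n a, Nat.succ_eq_add_one]
    ring

lemma fin3_ifs : (((0:Fin 3) = 0) = True) ∧ (((0:Fin 3) = 1) = False) ∧ (((0:Fin 3) = 2) = False)
    ∧ (((1:Fin 3) = 0) = False) ∧ (((1:Fin 3) = 1) = True) ∧ (((1:Fin 3) = 2) = False)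
    ∧ (((2:Fin 3) = 0) = False) ∧ (((2:Fin 3) = 1) = False) ∧ (((2:Fin 3) = 2) = True) := by
  refine ⟨?_, ?_, ?_, ?_, ?_, ?_, ?_, ?_, ?_⟩ <;> simp only [eq_iff_iff] <;> constructor <;> decide

lemma G : ∀ (n a b m : ℕ), a + b + m = n → 1 ≤ m →
    (univ.filter fun S : Fin n → Fin 3 =>
        cnt S 0 = a ∧ cnt S 1 = b ∧ cnt S 2 = m ∧ cond4 S).card
      = n.choose a * (m - 1 + b).choose b := by
  intro n
  induction n with
  | zero => intro a b m h hm; omega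
  | succ n ih =>
    intro a b m h hm
    rw [card_pi_succ, Fin.sum_univ_three]
    simp only [cnt_cons, cond4_cons, fin3_ifs.1, fin3_ifs.2.1, fin3_ifs.2.2.1, fin3_ifs.2.2.2.1,
      fin3_ifs.2.2.2.2.1, fin3_ifs.2.2.2.2.2.1, fin3_ifs.2.2.2.2.2.2.1,
      fin3_ifs.2.2.2.2.2.2.2.1, fin3_ifs.2.2.2.2.2.2.2.2, if_true, if_false,
      zero_add, false_implies, true_implies, true_and]
    have h0 : (Finset.filter (fun S : Fin n → Fin 3 =>
          1 + cnt S 0 = a ∧ cnt S 1 = b ∧ cnt S 2 = m ∧ cond4 S) Finset.univ).card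
        = if a = 0 then 0 else n.choose (a - 1) * (m - 1 + b).choose b := by
      rcases a with _ | a
      · rw [if_pos rfl, Finset.card_eq_zero, Finset.filter_eq_empty_iff]
        rintro S - ⟨hA, -⟩
        omega
      · rw [if_neg (Nat.succ_ne_zero a), Nat.succ_sub_one]
        have heq : Finset.filter (fun S : Fin n → Fin 3 =>
              1 + cnt S 0 = a + 1 ∧ cnt S 1 = b ∧ cnt S 2 = m ∧ cond4 S) Finset.univ
            = Finset.filter (fun S : Fin n → Fin 3 =>
              cnt S 0 = a ∧ cnt S 1 = b ∧ cnt S 2 = m ∧ cond4 S) Finset.univ := by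
          apply Finset.filter_congr
          intro S _
          constructor
          · rintro ⟨hA, hB, hC, hE⟩; exact ⟨by omega, hB, hC, hE⟩
          · rintro ⟨hA, hB, hC, hE⟩; exact ⟨by omega, hB, hC, hE⟩
        rw [heq]
        exact ih a b m (by omega) hm
    have h1 : (Finset.filter (fun S : Fin n → Fin 3 =>
          cnt S 0 = a ∧ 1 + cnt S 1 = b ∧ cnt S 2 = m ∧ (∃ r, S r = 2) ∧ cond4 S) Finset.univ).card
        = if b = 0 then 0 else n.choose a * (m - 1 + (b - 1)).choose (b - 1) := by
      rcases b with _ | b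
      · rw [if_pos rfl, Finset.card_eq_zero, Finset.filter_eq_empty_iff]
        rintro S - ⟨-, hB, -⟩
        omega
      · rw [if_neg (Nat.succ_ne_zero b), Nat.succ_sub_one]
        have heq : Finset.filter (fun S : Fin n → Fin 3 =>
              cnt S 0 = a ∧ 1 + cnt S 1 = b + 1 ∧ cnt S 2 = m ∧ (∃ r, S r = 2) ∧ cond4 S) Finset.univ
            = Finset.filter (fun S : Fin n → Fin 3 =>
              cnt S 0 = a ∧ cnt S 1 = b ∧ cnt S 2 = m ∧ cond4 S) Finset.univ := by
          apply Finset.filter_congr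
          intro S _
          constructor
          · rintro ⟨hA, hB, hC, -, hE⟩; exact ⟨hA, by omega, hC, hE⟩
          · rintro ⟨hA, hB, hC, hE⟩
            exact ⟨hA, by omega, hC, exists_of_cnt S 2 (by omega), hE⟩
        rw [heq]
        exact ih a b m (by omega) hm
    have h2 : (Finset.filter (fun S : Fin n → Fin 3 =>
          cnt S 0 = a ∧ cnt S 1 = b ∧ 1 + cnt S 2 = m ∧ cond4 S) Finset.univ).card
        = if m - 1 = 0 then (if a = n ∧ b = 0 then 1 else 0)
            else n.choose a * (m - 1 - 1 + b).choose b := by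
      clear h0 h1
      obtain ⟨m, rfl⟩ : ∃ m', m = m' + 1 := ⟨m - 1, by omega⟩
      simp only [Nat.add_sub_cancel]
      have heq : Finset.filter (fun S : Fin n → Fin 3 =>
            cnt S 0 = a ∧ cnt S 1 = b ∧ 1 + cnt S 2 = m + 1 ∧ cond4 S) Finset.univ
          = Finset.filter (fun S : Fin n → Fin 3 =>
            cnt S 0 = a ∧ cnt S 1 = b ∧ cnt S 2 = m ∧ cond4 S) Finset.univ := by
        apply Finset.filter_congr
        intro S _
        constructor
        · rintro ⟨hA, hB, hC, hE⟩; exact ⟨hA, hB, by omega, hE⟩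
        · rintro ⟨hA, hB, hC, hE⟩; exact ⟨hA, hB, by omega, hE⟩
      rw [heq]
      rcases m with _ | m
      · rw [if_pos rfl]
        exact G0 n a b
      · rw [if_neg (Nat.succ_ne_zero m), Nat.succ_sub_one]
        exact ih a b (m + 1) (by omega) (by omega)
    rw [h0, h1, h2]
    exact pascal2 n a b m h hm

lemma Frec (n a b m : ℕ) (ha : 1 ≤ a) (hm : 1 ≤ m) (h : a + b + m = n + 1) :
    (univ.filter fun S : Fin (n + 1) → Fin 3 =>
        cnt S 0 = a ∧ cnt S 1 = b ∧ cnt S 2 = m ∧ cond4 S ∧ cond5 S).card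
      = n.choose (a - 1) * (m - 1 + b).choose b
        + (if b = 0 then 0 else
            (univ.filter fun S : Fin n → Fin 3 =>
              cnt S 0 = a ∧ cnt S 1 = b - 1 ∧ cnt S 2 = m ∧ cond4 S ∧ cond5 S).card) := by
  rw [card_pi_succ, Fin.sum_univ_three]
  simp only [cnt_cons, cond4_cons, cond5_cons, fin3_ifs.1, fin3_ifs.2.1, fin3_ifs.2.2.1,
    fin3_ifs.2.2.2.1, fin3_ifs.2.2.2.2.1, fin3_ifs.2.2.2.2.2.1, fin3_ifs.2.2.2.2.2.2.1,
    fin3_ifs.2.2.2.2.2.2.2.1, fin3_ifs.2.2.2.2.2.2.2.2, if_true, if_false, zero_add,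
    false_implies, true_implies, true_and, true_or, or_false, false_or, and_true,
    not_true, not_false_iff, false_and, and_false]
  have h2 : (Finset.filter (fun S : Fin n → Fin 3 =>
        cnt S 0 = a ∧ cnt S 1 = b ∧ 1 + cnt S 2 = m ∧ cond4 S ∧ (2 : Fin 3) ≠ 2 ∧ cond5 S)
        Finset.univ).card = 0 := by
    rw [Finset.card_eq_zero, Finset.filter_eq_empty_iff]
    rintro S - ⟨-, -, -, -, hno, -⟩
    exact hno rfl
  have h0 : (Finset.filter (fun S : Fin n → Fin 3 =>
        1 + cnt S 0 = a ∧ cnt S 1 = b ∧ cnt S 2 = m ∧ cond4 S) Finset.univ).card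
      = n.choose (a - 1) * (m - 1 + b).choose b := by
    obtain ⟨a, rfl⟩ : ∃ k, a = k + 1 := ⟨a - 1, by omega⟩
    have heq : Finset.filter (fun S : Fin n → Fin 3 =>
          1 + cnt S 0 = a + 1 ∧ cnt S 1 = b ∧ cnt S 2 = m ∧ cond4 S) Finset.univ
        = Finset.filter (fun S : Fin n → Fin 3 =>
          cnt S 0 = a ∧ cnt S 1 = b ∧ cnt S 2 = m ∧ cond4 S) Finset.univ := by
      apply Finset.filter_congr
      intro S _
      constructor
      · rintro ⟨hA, hB, hC, hE⟩; exact ⟨by omega, hB, hC, hE⟩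
      · rintro ⟨hA, hB, hC, hE⟩; exact ⟨by omega, hB, hC, hE⟩
    rw [heq, Nat.succ_sub_one]
    exact G n a b m (by omega) hm
  have h1 : (Finset.filter (fun S : Fin n → Fin 3 =>
        cnt S 0 = a ∧ 1 + cnt S 1 = b ∧ cnt S 2 = m ∧ ((∃ r, S r = 2) ∧ cond4 S)
          ∧ (1 : Fin 3) ≠ 2 ∧ cond5 S) Finset.univ).card
      = if b = 0 then 0 else
          (Finset.filter (fun S : Fin n → Fin 3 =>
            cnt S 0 = a ∧ cnt S 1 = b - 1 ∧ cnt S 2 = m ∧ cond4 S ∧ cond5 S) Finset.univ).card := by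
    rcases b with _ | b
    · rw [if_pos rfl, Finset.card_eq_zero, Finset.filter_eq_empty_iff]
      rintro S - ⟨-, hB, -⟩
      omega
    · rw [if_neg (Nat.succ_ne_zero b), Nat.succ_sub_one]
      congr 1
      apply Finset.filter_congr
      intro S _
      constructor
      · rintro ⟨hA, hB, hC, ⟨-, hE⟩, -, hF⟩; exact ⟨hA, by omega, hC, hE, hF⟩
      · rintro ⟨hA, hB, hC, hE, hF⟩
        exact ⟨hA, by omega, hC, ⟨exists_of_cnt S 2 (by omega), hE⟩, by decide, hF⟩
  rw [h0, h1, h2, add_zero]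

lemma F : ∀ (b n a m : ℕ), 1 ≤ a → 1 ≤ m → a + b + m = n →
    (univ.filter fun S : Fin n → Fin 3 =>
        cnt S 0 = a ∧ cnt S 1 = b ∧ cnt S 2 = m ∧ cond4 S ∧ cond5 S).card
      = ∑ c ∈ Finset.range (b + 1),
          (n - 1 - c).choose (a - 1) * (m - 1 + b - c).choose (m - 1) := by
  intro b
  induction b with
  | zero =>
    intro n a m ha hm h
    obtain ⟨n, rfl⟩ : ∃ k, n = k + 1 := ⟨n - 1, by omega⟩
    rw [Frec n a 0 m ha hm h, if_pos rfl, add_zero, Finset.sum_range_one]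
    simp [Nat.choose_self]
  | succ b ihb =>
    intro n a m ha hm h
    obtain ⟨n, rfl⟩ : ∃ k, n = k + 1 := ⟨n - 1, by omega⟩
    rw [Frec n a (b + 1) m ha hm h, if_neg (Nat.succ_ne_zero b), Nat.succ_sub_one,
      ihb n a m ha hm (by omega)]
    conv_rhs => rw [Finset.sum_range_succ']
    have e1 : ∀ c ∈ Finset.range (b + 1),
        (n + 1 - 1 - (c + 1)).choose (a - 1) * (m - 1 + (b + 1) - (c + 1)).choose (m - 1)
          = (n - 1 - c).choose (a - 1) * (m - 1 + b - c).choose (m - 1) := by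
      intro c _
      congr 2 <;> omega
    rw [Finset.sum_congr rfl e1]
    have e2 : (n + 1 - 1 - 0).choose (a - 1) * (m - 1 + (b + 1) - 0).choose (m - 1)
        = n.choose (a - 1) * (m - 1 + (b + 1)).choose (b + 1) := by
      have t1 : n + 1 - 1 - 0 = n := by omega
      have t2 : m - 1 + (b + 1) - 0 = m - 1 + (b + 1) := by omega
      have t3 := Nat.choose_symm (show b + 1 ≤ m - 1 + (b + 1) from by omega)
      rw [show m - 1 + (b + 1) - (b + 1) = m - 1 from by omega] at t3
      rw [t1, t2, t3]
    rw [e2]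
    omega

/-- Sequences over {0,1,*} are encoded as functions `Fin n → Fin 3`,
with `0` = zero, `1` = one, `2` = star. -/
theorem stmt3 (n a b : ℕ) (ha : 1 ≤ a) (hm : 1 ≤ n - a - b) :
    ((Finset.univ : Finset (Fin n → Fin 3)).filter (fun S =>
        (Finset.univ.filter fun i => S i = 0).card = a ∧
        (Finset.univ.filter fun i => S i = 1).card = b ∧
        (Finset.univ.filter fun i => S i = 2).card = n - a - b ∧
        (∀ q, S q = 1 → ∃ r, q < r ∧ S r = 2) ∧
        (∃ p, S p = 0 ∧ ∀ r, r ≤ p → S r ≠ 2))).card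
      = ∑ c ∈ Finset.range (b + 1),
          (n - 1 - c).choose (a - 1) * (n - a - b - 1 + b - c).choose (n - a - b - 1) := by
  have h := F b n a (n - a - b) ha hm (by omega)
  unfold cnt cond4 cond5 at h
  convert h using 2
end

section
/- Fix n, and natural numbers a, b with b ≥ 1 and m := n − a − b ≥ 1. The number of sequences S of length n over {0,1,*} with exactly a zeros, b ones and m stars, such that some 1 occurs to the right of the rightmost * and no 0 occurs to the left of the leftmost *, equals Σ_{c=0}^{a} C(n−1−c, b−1)·C(m−1+a−c, m−1). -/
open Finset

private lemma fin3_cases (x : Fin 3) : x = 0 ∨ x = 1 ∨ x = 2 := by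
  fin_cases x <;> simp

private lemma fin3_count (n : ℕ) (S : Fin n → Fin 3) :
    (univ.filter fun i => S i = 0).card + (univ.filter fun i => S i = 1).card
      + (univ.filter fun i => S i = 2).card = n := by
  have h := Finset.card_eq_sum_card_fiberwise (f := S) (s := univ) (t := univ)
    (fun x _ => mem_univ _)
  rw [Finset.card_univ, Fintype.card_fin, Fin.sum_univ_three] at h
  omega

private def LL (n : ℕ) (h : 0 < n) (c : ℕ) : Fin n := ⟨n - 1 - c, by omega⟩

private def PP (n : ℕ) (h : 0 < n) (c : ℕ) (T : Finset (Fin n)) : Fin n :=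
  if hR : (Finset.Iio (LL n h c) \ T).Nonempty then (Finset.Iio (LL n h c) \ T).min' hR
  else LL n h c

private def DD (n : ℕ) (h : 0 < n) (a b m : ℕ) :
    Finset ((_ : ℕ) × (_ : Finset (Fin n)) × Finset (Fin n)) :=
  (Finset.range (a + 1)).sigma fun c =>
    ((Finset.Iio (LL n h c)).powersetCard (b - 1)).sigma fun T =>
      ((Finset.Iio (LL n h c) \ T).erase (PP n h c T)).powersetCard (m - 1)

private def ff (n : ℕ) (h : 0 < n) (x : (_ : ℕ) × (_ : Finset (Fin n)) × Finset (Fin n)) :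
    Fin n → Fin 3 :=
  fun i => if i ∈ x.2.1 ∨ i = LL n h x.1 then 1
           else if i = PP n h x.1 x.2.1 ∨ i ∈ x.2.2 then 2 else 0

/-- Sequences over {0,1,*} are encoded as functions `Fin n → Fin 3`,
with `0` = zero, `1` = one, `2` = star. -/
theorem stmt4 (n a b : ℕ) (hb : 1 ≤ b) (hm : 1 ≤ n - a - b) :
    ((Finset.univ : Finset (Fin n → Fin 3)).filter (fun S =>
        (Finset.univ.filter fun i => S i = 0).card = a ∧
        (Finset.univ.filter fun i => S i = 1).card = b ∧
        (Finset.univ.filter fun i => S i = 2).card = n - a - b ∧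
        (∃ q, S q = 1 ∧ ∀ r, q ≤ r → S r ≠ 2) ∧
        (∀ p, S p = 0 → ∃ r, r < p ∧ S r = 2))).card
      = ∑ c ∈ Finset.range (a + 1),
          (n - 1 - c).choose (b - 1) * (n - a - b - 1 + a - c).choose (n - a - b - 1) := by
  set m := n - a - b with hmdef
  have hn : n = a + b + m := by omega
  have h0 : 0 < n := by omega
  -- membership characterization for DD
  have hmemDD : ∀ x : (_ : ℕ) × (_ : Finset (Fin n)) × Finset (Fin n),
      x ∈ DD n h0 a b m ↔ x.1 ≤ a ∧ x.2.1 ⊆ Finset.Iio (LL n h0 x.1) ∧ x.2.1.card = b - 1 ∧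
        x.2.2 ⊆ (Finset.Iio (LL n h0 x.1) \ x.2.1).erase (PP n h0 x.1 x.2.1) ∧
        x.2.2.card = m - 1 := by
    rintro ⟨c, T, U⟩
    simp [DD, Finset.mem_sigma, Finset.mem_powersetCard, Nat.lt_succ_iff, and_assoc]
  -- core structural facts
  have core : ∀ (c : ℕ) (T U : Finset (Fin n)), c ≤ a → T ⊆ Finset.Iio (LL n h0 c) →
      T.card = b - 1 → U ⊆ (Finset.Iio (LL n h0 c) \ T).erase (PP n h0 c T) →
      U.card = m - 1 →
      (Finset.univ.filter fun i => ff n h0 ⟨c, T, U⟩ i = 1) = insert (LL n h0 c) T ∧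
      (Finset.univ.filter fun i => ff n h0 ⟨c, T, U⟩ i = 2) = insert (PP n h0 c T) U ∧
      PP n h0 c T ∈ Finset.Iio (LL n h0 c) \ T ∧
      (∀ r ∈ Finset.Iio (LL n h0 c) \ T, PP n h0 c T ≤ r) := by
    intro c T U hca hT hTc hU hUc
    have hLval : (LL n h0 c : ℕ) = n - 1 - c := rfl
    have hRne : (Finset.Iio (LL n h0 c) \ T).Nonempty := by
      rw [← Finset.card_pos, Finset.card_sdiff_of_subset hT, Fin.card_Iio, hTc, hLval]
      omega
    have hPeq : PP n h0 c T = (Finset.Iio (LL n h0 c) \ T).min' hRne := by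
      unfold PP; exact dif_pos hRne
    have hPmem : PP n h0 c T ∈ Finset.Iio (LL n h0 c) \ T := by
      rw [hPeq]; exact Finset.min'_mem _ hRne
    have hPmin : ∀ r ∈ Finset.Iio (LL n h0 c) \ T, PP n h0 c T ≤ r := by
      intro r hr; rw [hPeq]; exact Finset.min'_le _ r hr
    have hPltL : PP n h0 c T < LL n h0 c := Finset.mem_Iio.mp (Finset.mem_sdiff.mp hPmem).1
    have hPT : PP n h0 c T ∉ T := (Finset.mem_sdiff.mp hPmem).2
    have hLT : LL n h0 c ∉ T := fun h => lt_irrefl _ (Finset.mem_Iio.mp (hT h))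
    have hUsub : U ⊆ Finset.Iio (LL n h0 c) \ T :=
      hU.trans (Finset.erase_subset _ _)
    have hPU : PP n h0 c T ∉ U := fun h => Finset.notMem_erase _ _ (hU h)
    refine ⟨?_, ?_, hPmem, hPmin⟩
    · ext i
      simp only [Finset.mem_filter, Finset.mem_univ, true_and, Finset.mem_insert, ff]
      split_ifs with h1 h2
      · exact iff_of_true rfl (by tauto)
      · exact iff_of_false (by decide) (by tauto)
      · exact iff_of_false (by decide) (by tauto)
    · ext i
      simp only [Finset.mem_filter, Finset.mem_univ, true_and, Finset.mem_insert, ff]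
      split_ifs with h1 h2
      · refine iff_of_false (by decide) ?_
        rintro (rfl | hi)
        · rcases h1 with h | h
          · exact hPT h
          · exact ne_of_lt hPltL h
        · rcases h1 with h | h
          · exact (Finset.mem_sdiff.mp (hUsub hi)).2 h
          · exact ne_of_lt (Finset.mem_Iio.mp (Finset.mem_sdiff.mp (hUsub hi)).1) h
      · exact iff_of_true rfl h2
      · exact iff_of_false (by decide) h2
  -- maps into the filter
  have hmaps : ∀ x ∈ DD n h0 a b m, ff n h0 x ∈
      (Finset.univ : Finset (Fin n → Fin 3)).filter (fun S =>
        (Finset.univ.filter fun i => S i = 0).card = a ∧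
        (Finset.univ.filter fun i => S i = 1).card = b ∧
        (Finset.univ.filter fun i => S i = 2).card = m ∧
        (∃ q, S q = 1 ∧ ∀ r, q ≤ r → S r ≠ 2) ∧
        (∀ p, S p = 0 → ∃ r, r < p ∧ S r = 2)) := by
    rintro ⟨c, T, U⟩ hx
    rw [hmemDD] at hx
    obtain ⟨hca, hT, hTc, hU, hUc⟩ := hx
    obtain ⟨hones, hstars, hPmem, hPmin⟩ := core c T U hca hT hTc hU hUc
    have hLT : LL n h0 c ∉ T := fun h => lt_irrefl _ (Finset.mem_Iio.mp (hT h))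
    have hPU : PP n h0 c T ∉ U := fun h => Finset.notMem_erase _ _ (hU h)
    have hPltL : PP n h0 c T < LL n h0 c := Finset.mem_Iio.mp (Finset.mem_sdiff.mp hPmem).1
    have hUsub : U ⊆ Finset.Iio (LL n h0 c) \ T := hU.trans (Finset.erase_subset _ _)
    have h1c : (Finset.univ.filter fun i => ff n h0 ⟨c, T, U⟩ i = 1).card = b := by
      rw [hones, Finset.card_insert_of_notMem hLT, hTc]; omega
    have h2c : (Finset.univ.filter fun i => ff n h0 ⟨c, T, U⟩ i = 2).card = m := by
      rw [hstars, Finset.card_insert_of_notMem hPU, hUc]; omega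
    have h0c : (Finset.univ.filter fun i => ff n h0 ⟨c, T, U⟩ i = 0).card = a := by
      have ht := fin3_count n (ff n h0 ⟨c, T, U⟩)
      rw [h1c, h2c] at ht; omega
    refine Finset.mem_filter.mpr ⟨Finset.mem_univ _, h0c, h1c, h2c, ?_, ?_⟩
    · refine ⟨LL n h0 c, ?_, ?_⟩
      · have : LL n h0 c ∈ Finset.univ.filter fun i => ff n h0 ⟨c, T, U⟩ i = 1 := by
          rw [hones]; exact Finset.mem_insert_self _ _
        exact (Finset.mem_filter.mp this).2
      · intro r hr hr2
        have : r ∈ insert (PP n h0 c T) U := by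
          rw [← hstars]; exact Finset.mem_filter.mpr ⟨Finset.mem_univ _, hr2⟩
        have hrlt : r < LL n h0 c := by
          rcases Finset.mem_insert.mp this with rfl | h
          · exact hPltL
          · exact Finset.mem_Iio.mp (Finset.mem_sdiff.mp (hUsub h)).1
        exact absurd hrlt (not_lt.mpr hr)
    · intro p hp
      have hp1 : p ∉ insert (LL n h0 c) T := by
        intro h
        have : ff n h0 ⟨c, T, U⟩ p = 1 := by
          have := Finset.mem_filter.mp (hones ▸ h : p ∈ Finset.univ.filter
            fun i => ff n h0 ⟨c, T, U⟩ i = 1)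
          exact this.2
        rw [hp] at this; exact absurd this (by decide)
      have hp2 : p ∉ insert (PP n h0 c T) U := by
        intro h
        have : ff n h0 ⟨c, T, U⟩ p = 2 := by
          have := Finset.mem_filter.mp (hstars ▸ h : p ∈ Finset.univ.filter
            fun i => ff n h0 ⟨c, T, U⟩ i = 2)
          exact this.2
        rw [hp] at this; exact absurd this (by decide)
      refine ⟨PP n h0 c T, ?_, ?_⟩
      · by_cases hpL : p < LL n h0 c
        · have hpR : p ∈ Finset.Iio (LL n h0 c) \ T := by
            refine Finset.mem_sdiff.mpr ⟨Finset.mem_Iio.mpr hpL, fun h => hp1 (Finset.mem_insert_of_mem h)⟩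
          have hle := hPmin p hpR
          have hne : PP n h0 c T ≠ p := fun h => hp2 (h ▸ Finset.mem_insert_self _ _)
          exact lt_of_le_of_ne hle hne
        · exact lt_of_lt_of_le hPltL (not_lt.mp hpL)
      · have : PP n h0 c T ∈ Finset.univ.filter fun i => ff n h0 ⟨c, T, U⟩ i = 2 := by
          rw [hstars]; exact Finset.mem_insert_self _ _
        exact (Finset.mem_filter.mp this).2
  -- injectivity
  have hinj : ∀ x₁ (h₁ : x₁ ∈ DD n h0 a b m) x₂ (h₂ : x₂ ∈ DD n h0 a b m),
      ff n h0 x₁ = ff n h0 x₂ → x₁ = x₂ := by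
    rintro ⟨c₁, T₁, U₁⟩ h₁ ⟨c₂, T₂, U₂⟩ h₂ hff
    rw [hmemDD] at h₁ h₂
    obtain ⟨hca₁, hT₁, hTc₁, hU₁, hUc₁⟩ := h₁
    obtain ⟨hca₂, hT₂, hTc₂, hU₂, hUc₂⟩ := h₂
    obtain ⟨hones₁, hstars₁, -, -⟩ := core c₁ T₁ U₁ hca₁ hT₁ hTc₁ hU₁ hUc₁
    obtain ⟨hones₂, hstars₂, -, -⟩ := core c₂ T₂ U₂ hca₂ hT₂ hTc₂ hU₂ hUc₂
    have honeq : insert (LL n h0 c₁) T₁ = insert (LL n h0 c₂) T₂ := by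
      rw [← hones₁, ← hones₂, hff]
    have hL1 : LL n h0 c₁ ∈ insert (LL n h0 c₂) T₂ := honeq ▸ Finset.mem_insert_self _ _
    have hL2 : LL n h0 c₂ ∈ insert (LL n h0 c₁) T₁ := honeq ▸ Finset.mem_insert_self _ _
    have hLeq : LL n h0 c₁ = LL n h0 c₂ := by
      rcases Finset.mem_insert.mp hL1 with h | h
      · exact h
      · rcases Finset.mem_insert.mp hL2 with h' | h'
        · exact h'.symm
        · exact absurd (lt_trans (Finset.mem_Iio.mp (hT₂ h)) (Finset.mem_Iio.mp (hT₁ h')))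
            (lt_irrefl _)
    have hceq : c₁ = c₂ := by
      have h' : n - 1 - c₁ = n - 1 - c₂ := congrArg Fin.val hLeq
      have hca₁' : c₁ ≤ a := hca₁
      have hca₂' : c₂ ≤ a := hca₂
      omega
    subst hceq
    have hLT₁ : LL n h0 c₁ ∉ T₁ := fun h => lt_irrefl _ (Finset.mem_Iio.mp (hT₁ h))
    have hLT₂ : LL n h0 c₁ ∉ T₂ := fun h => lt_irrefl _ (Finset.mem_Iio.mp (hT₂ h))
    have hTeq : T₁ = T₂ := by
      have := congrArg (fun s => Finset.erase s (LL n h0 c₁)) honeq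
      simpa [Finset.erase_insert hLT₁, Finset.erase_insert hLT₂] using this
    subst hTeq
    have hstareq : insert (PP n h0 c₁ T₁) U₁ = insert (PP n h0 c₁ T₁) U₂ := by
      rw [← hstars₁, ← hstars₂, hff]
    have hPU₁ : PP n h0 c₁ T₁ ∉ U₁ := fun h => Finset.notMem_erase _ _ (hU₁ h)
    have hPU₂ : PP n h0 c₁ T₁ ∉ U₂ := fun h => Finset.notMem_erase _ _ (hU₂ h)
    have hUeq : U₁ = U₂ := by
      have := congrArg (fun s => Finset.erase s (PP n h0 c₁ T₁)) hstareq
      simpa [Finset.erase_insert hPU₁, Finset.erase_insert hPU₂] using this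
    subst hUeq
    rfl
  -- surjectivity
  have hsurj : ∀ S ∈ (Finset.univ : Finset (Fin n → Fin 3)).filter (fun S =>
        (Finset.univ.filter fun i => S i = 0).card = a ∧
        (Finset.univ.filter fun i => S i = 1).card = b ∧
        (Finset.univ.filter fun i => S i = 2).card = m ∧
        (∃ q, S q = 1 ∧ ∀ r, q ≤ r → S r ≠ 2) ∧
        (∀ p, S p = 0 → ∃ r, r < p ∧ S r = 2)),
      ∃ x, ∃ (hx : x ∈ DD n h0 a b m), ff n h0 x = S := by
    intro S hS
    rw [Finset.mem_filter] at hS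
    obtain ⟨-, h0c, h1c, h2c, ⟨q, hq1, hq2⟩, hz⟩ := hS
    have honed : (Finset.univ.filter fun i => S i = 1).Nonempty := by
      rw [← Finset.card_pos, h1c]; omega
    set Lm := (Finset.univ.filter fun i => S i = 1).max' honed with hLm
    have hLm1 : S Lm = 1 := (Finset.mem_filter.mp ((Finset.univ.filter
      fun i => S i = 1).max'_mem honed)).2
    have hqLm : q ≤ Lm := Finset.le_max' _ q (Finset.mem_filter.mpr ⟨Finset.mem_univ _, hq1⟩)
    have hafter : ∀ r : Fin n, Lm < r → S r = 0 := by
      intro r hr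
      have hr1 : S r ≠ 1 := fun h =>
        absurd (Finset.le_max' _ r (Finset.mem_filter.mpr ⟨Finset.mem_univ _, h⟩))
          (not_le.mpr hr)
      have hr2 : S r ≠ 2 := hq2 r (le_trans hqLm (le_of_lt hr))
      rcases fin3_cases (S r) with h | h | h
      · exact h
      · exact absurd h hr1
      · exact absurd h hr2
    set c := n - 1 - (Lm : ℕ) with hc
    have hca : c ≤ a := by
      have hsub : Finset.Ioi Lm ⊆ Finset.univ.filter fun i => S i = 0 := by
        intro r hr
        exact Finset.mem_filter.mpr ⟨Finset.mem_univ _, hafter r (Finset.mem_Ioi.mp hr)⟩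
      have := Finset.card_le_card hsub
      rw [Fin.card_Ioi, h0c] at this
      omega
    have hLL : LL n h0 c = Lm := by
      apply Fin.ext
      simp only [LL]
      have := Lm.isLt
      omega
    set T := (Finset.univ.filter fun i => S i = 1).erase Lm with hT
    have hT1 : T ⊆ Finset.Iio (LL n h0 c) := by
      intro i hi
      rw [hLL, Finset.mem_Iio]
      obtain ⟨hne, hmem⟩ := Finset.mem_erase.mp hi
      exact lt_of_le_of_ne (Finset.le_max' _ i hmem) hne
    have hT2 : T.card = b - 1 := by
      rw [hT, Finset.card_erase_of_mem ((Finset.univ.filter fun i => S i = 1).max'_mem honed),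
        h1c]
    have hstars_sub : (Finset.univ.filter fun i => S i = 2) ⊆ Finset.Iio (LL n h0 c) \ T := by
      intro r hr
      have hr2 : S r = 2 := (Finset.mem_filter.mp hr).2
      have hrq : r < q := by
        by_contra h
        exact hq2 r (not_lt.mp h) hr2
      refine Finset.mem_sdiff.mpr ⟨?_, ?_⟩
      · rw [hLL, Finset.mem_Iio]; exact lt_of_lt_of_le hrq hqLm
      · intro h
        have := (Finset.mem_filter.mp (Finset.mem_of_mem_erase h)).2
        rw [hr2] at this; exact absurd this (by decide)
    have hstarsne : (Finset.univ.filter fun i => S i = 2).Nonempty := by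
      rw [← Finset.card_pos, h2c]; omega
    have hRne : (Finset.Iio (LL n h0 c) \ T).Nonempty :=
      hstarsne.mono hstars_sub
    have hPeq : PP n h0 c T = (Finset.Iio (LL n h0 c) \ T).min' hRne := by
      unfold PP; exact dif_pos hRne
    set p0 := (Finset.Iio (LL n h0 c) \ T).min' hRne with hp0
    have hp0mem : p0 ∈ Finset.Iio (LL n h0 c) \ T := Finset.min'_mem _ hRne
    have hp0ltL : p0 < Lm := by
      have := Finset.mem_Iio.mp (Finset.mem_sdiff.mp hp0mem).1
      rwa [hLL] at this
    have hp0star : S p0 = 2 := by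
      have h1 : S p0 ≠ 1 := by
        intro h
        have : p0 ∈ T := Finset.mem_erase.mpr ⟨ne_of_lt hp0ltL,
          Finset.mem_filter.mpr ⟨Finset.mem_univ _, h⟩⟩
        exact (Finset.mem_sdiff.mp hp0mem).2 this
      have h00 : S p0 ≠ 0 := by
        intro h
        obtain ⟨r, hrp, hr2⟩ := hz p0 h
        have : r ∈ Finset.Iio (LL n h0 c) \ T :=
          hstars_sub (Finset.mem_filter.mpr ⟨Finset.mem_univ _, hr2⟩)
        exact absurd (Finset.min'_le _ r this) (not_le.mpr hrp)
      rcases fin3_cases (S p0) with h | h | h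
      · exact absurd h h00
      · exact absurd h h1
      · exact h
    set U := (Finset.univ.filter fun i => S i = 2).erase p0 with hU
    have hU1 : U ⊆ (Finset.Iio (LL n h0 c) \ T).erase (PP n h0 c T) := by
      rw [hPeq]
      exact Finset.erase_subset_erase _ hstars_sub
    have hU2 : U.card = m - 1 := by
      have hp0f : p0 ∈ Finset.univ.filter fun i => S i = 2 :=
        Finset.mem_filter.mpr ⟨Finset.mem_univ _, hp0star⟩
      rw [hU, Finset.card_erase_of_mem hp0f, h2c]
    refine ⟨⟨c, T, U⟩, (hmemDD _).mpr ⟨hca, hT1, hT2, hU1, hU2⟩, ?_⟩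
    funext i
    show (if i ∈ T ∨ i = LL n h0 c then (1 : Fin 3)
      else if i = PP n h0 c T ∨ i ∈ U then 2 else 0) = S i
    rw [hLL, hPeq]
    rcases fin3_cases (S i) with h | h | h
    · rw [h]
      have hiT : i ∉ T := by
        intro hmem
        have := (Finset.mem_filter.mp (Finset.mem_of_mem_erase hmem)).2
        rw [h] at this; exact absurd this (by decide)
      have hiL : i ≠ Lm := by
        intro heq; rw [heq, hLm1] at h; exact absurd h.symm (by decide)
      have hip : i ≠ p0 := by
        intro heq; rw [heq, hp0star] at h; exact absurd h.symm (by decide)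
      have hiU : i ∉ U := by
        intro hmem
        have := (Finset.mem_filter.mp (Finset.mem_of_mem_erase hmem)).2
        rw [h] at this; exact absurd this (by decide)
      rw [if_neg (by tauto), if_neg (by tauto)]
    · rw [h]
      have : i = Lm ∨ i ∈ T := by
        by_cases heq : i = Lm
        · exact Or.inl heq
        · exact Or.inr (Finset.mem_erase.mpr ⟨heq,
            Finset.mem_filter.mpr ⟨Finset.mem_univ _, h⟩⟩)
      rw [if_pos (by tauto)]
    · rw [h]
      have hiT : i ∉ T := by
        intro hmem
        have := (Finset.mem_filter.mp (Finset.mem_of_mem_erase hmem)).2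
        rw [h] at this; exact absurd this (by decide)
      have hiL : i ≠ Lm := by
        intro heq; rw [heq, hLm1] at h; exact absurd h (by decide)
      have : i = p0 ∨ i ∈ U := by
        by_cases heq : i = p0
        · exact Or.inl heq
        · exact Or.inr (Finset.mem_erase.mpr ⟨heq,
            Finset.mem_filter.mpr ⟨Finset.mem_univ _, h⟩⟩)
      rw [if_neg (by tauto), if_pos (by tauto)]
  -- cardinality of DD
  have hDcard : (DD n h0 a b m).card
      = ∑ c ∈ Finset.range (a + 1),
          (n - 1 - c).choose (b - 1) * (m - 1 + a - c).choose (m - 1) := by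
    rw [DD, Finset.card_sigma]
    refine Finset.sum_congr rfl fun c hc => ?_
    have hca : c ≤ a := Nat.lt_succ_iff.mp (Finset.mem_range.mp hc)
    rw [Finset.card_sigma]
    have step : ∀ T ∈ (Finset.Iio (LL n h0 c)).powersetCard (b - 1),
        (((Finset.Iio (LL n h0 c) \ T).erase (PP n h0 c T)).powersetCard (m - 1)).card
          = (m - 1 + a - c).choose (m - 1) := by
      intro T hT
      rw [Finset.mem_powersetCard] at hT
      have hLval : (LL n h0 c : ℕ) = n - 1 - c := rfl
      have hRcard : (Finset.Iio (LL n h0 c) \ T).card = m + a - c := by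
        rw [Finset.card_sdiff_of_subset hT.1, Fin.card_Iio, hT.2, hLval]
        omega
      have hRne : (Finset.Iio (LL n h0 c) \ T).Nonempty := by
        rw [← Finset.card_pos, hRcard]; omega
      have hPmem : PP n h0 c T ∈ Finset.Iio (LL n h0 c) \ T := by
        unfold PP; rw [dif_pos hRne]; exact Finset.min'_mem _ hRne
      rw [Finset.card_powersetCard, Finset.card_erase_of_mem hPmem, hRcard]
      congr 1
      omega
    rw [Finset.sum_congr rfl step, Finset.sum_const, Finset.card_powersetCard, Fin.card_Iio,
      smul_eq_mul]
    rfl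
  rw [← hDcard]
  exact (Finset.card_bij (fun x _ => ff n h0 x) hmaps hinj hsurj).symm
end

section
/- Let S ∈ {0,1}^n be a sequence with exactly k ones and n−k zeros (1 ≤ k ≤ n−1), with S ≠ 1^k 0^{n−k}. Let S' be obtained from S by replacing the leftmost 0 and the rightmost 1 with stars. Then S' has exactly two stars, exactly k−1 ones and n−k−1 zeros, no 1 to the right of its rightmost star, and no 0 to the left of its leftmost star; moreover replacing the leftmost star of S' with a 0 and the other star with a 1 recovers S. Conversely, starting from any sequence T of length n over {0,1,*} with exactly two stars, k−1 ones, n−k−1 zeros, no 1 right of the rightmost star and no 0 left of the leftmost star, replacing the leftmost star with 0 and the rightmost star with 1 yields a 0/1 sequence with k ones different from 1^k 0^{n−k}, and the two operations are mutually inverse. -/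
/-- Sequences over {0,1,*} are encoded as functions `Fin n → Fin 3`,
with `0` = zero, `1` = one, `2` = star.  The distinguished vertex
`v₀ = 1^k 0^{n-k}` is `fun i => if (i : ℕ) < k then 1 else 0`.
Rules (9) and (10) of the matching are mutually inverse. -/
theorem stmt9 (n k : ℕ) (hk1 : 1 ≤ k) (hk2 : k ≤ n - 1) :
    -- Rule (9): S is a 0/1-sequence with k ones, S ≠ 1^k 0^{n-k},
    -- p its leftmost 0, q its rightmost 1; replace both by stars.
    (∀ (S : Fin n → Fin 3) (p q : Fin n),
      (∀ i, S i = 0 ∨ S i = 1) →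
      (Finset.univ.filter fun i => S i = 1).card = k →
      S ≠ ((fun i => if (i : ℕ) < k then 1 else 0) : Fin n → Fin 3) →
      S p = 0 → (∀ r, r < p → S r ≠ 0) →
      S q = 1 → (∀ r, q < r → S r ≠ 1) →
      ((Finset.univ.filter fun i =>
          Function.update (Function.update S p 2) q 2 i = 2).card = 2 ∧
       (Finset.univ.filter fun i =>
          Function.update (Function.update S p 2) q 2 i = 1).card = k - 1 ∧
       (Finset.univ.filter fun i =>
          Function.update (Function.update S p 2) q 2 i = 0).card = n - k - 1 ∧
       (∀ r, Function.update (Function.update S p 2) q 2 r = 1 →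
          ∃ t, r < t ∧ Function.update (Function.update S p 2) q 2 t = 2) ∧
       (∀ r, Function.update (Function.update S p 2) q 2 r = 0 →
          ∃ t, t < r ∧ Function.update (Function.update S p 2) q 2 t = 2) ∧
       p < q ∧
       Function.update (Function.update
         (Function.update (Function.update S p 2) q 2) p 0) q 1 = S)) ∧
    -- Rule (10): T has exactly two stars, k-1 ones, n-k-1 zeros, no 1 right
    -- of the rightmost star, no 0 left of the leftmost star; p is its leftmost
    -- star and q its rightmost star; replace them by 0 and 1 respectively.
    (∀ (T : Fin n → Fin 3) (p q : Fin n),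
      (Finset.univ.filter fun i => T i = 2).card = 2 →
      (Finset.univ.filter fun i => T i = 1).card = k - 1 →
      (Finset.univ.filter fun i => T i = 0).card = n - k - 1 →
      (∀ r, T r = 1 → ∃ t, r < t ∧ T t = 2) →
      (∀ r, T r = 0 → ∃ t, t < r ∧ T t = 2) →
      T p = 2 → (∀ r, r < p → T r ≠ 2) →
      T q = 2 → (∀ r, q < r → T r ≠ 2) →
      ((∀ i, Function.update (Function.update T p 0) q 1 i = 0 ∨
             Function.update (Function.update T p 0) q 1 i = 1) ∧
       (Finset.univ.filter fun i =>
          Function.update (Function.update T p 0) q 1 i = 1).card = k ∧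
       Function.update (Function.update T p 0) q 1 ≠
         ((fun i => if (i : ℕ) < k then 1 else 0) : Fin n → Fin 3) ∧
       Function.update (Function.update
         (Function.update (Function.update T p 0) q 1) p 2) q 2 = T)) := by
  have hn2 : 2 ≤ n := by omega
  constructor
  · intro S p q hS hcard hne hp hpmin hq hqmax
    have hpq : p ≠ q := by
      intro h; rw [h, hq] at hp; exact absurd hp (by decide)
    -- p < q
    have hplt : p < q := by
      rcases lt_or_gt_of_ne hpq with h | h
      · exact h
      · exfalso
        have hiff : ∀ i : Fin n, S i = 1 ↔ (i : ℕ) < (p : ℕ) := by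
          intro i
          constructor
          · intro hi
            by_contra hc
            have hqi : q < i := lt_of_lt_of_le h (by exact Fin.le_def.mpr (by omega))
            exact hqmax i hqi hi
          · intro hi
            rcases hS i with h0 | h1
            · exact absurd h0 (hpmin i (Fin.lt_def.mpr hi))
            · exact h1
        have hfil : (Finset.univ.filter fun i => S i = 1) = Finset.Iio p := by
          ext i
          simp only [Finset.mem_filter, Finset.mem_univ, true_and, Finset.mem_Iio,
            hiff i, Fin.lt_def]
        have hkp : k = (p : ℕ) := by
          rw [hfil, Fin.card_Iio] at hcard; omega
        apply hne
        funext i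
        by_cases hik : (i : ℕ) < k
        · exact (hiff i).mpr (by omega) |>.trans (by simp [hik])
        · simp only [hik, if_false]
          rcases hS i with h0 | h1
          · exact h0
          · exact absurd ((hiff i).mp h1) (by omega)
    set S' := Function.update (Function.update S p 2) q 2 with hS'
    have hS'app : ∀ i, S' i = if i = q then 2 else if i = p then 2 else S i := by
      intro i; simp [hS', Function.update_apply]
    -- stars
    have hstars : (Finset.univ.filter fun i => S' i = 2) = {p, q} := by
      ext i
      simp only [Finset.mem_filter, Finset.mem_univ, true_and, Finset.mem_insert,
        Finset.mem_singleton, hS'app i]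
      by_cases h1' : i = q
      · simp [h1']
      · by_cases h2' : i = p
        · simp [h1', h2']
        · simp only [h1', h2', if_false, or_false, iff_false]
          rcases hS i with h0 | h0 <;> simp [h0]
    -- ones
    have hones : (Finset.univ.filter fun i => S' i = 1)
        = (Finset.univ.filter fun i => S i = 1).erase q := by
      ext i
      simp only [Finset.mem_erase, Finset.mem_filter, Finset.mem_univ, true_and, hS'app i]
      by_cases h1' : i = q
      · simp [h1']
      · by_cases h2' : i = p
        · subst h2'; simp [h1', hp]
        · simp [h1', h2']
    -- zeros of S
    have hzS : (Finset.univ.filter fun i => S i = 0).card = n - k := by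
      have hsplit := Finset.card_filter_add_card_filter_not
        (s := (Finset.univ : Finset (Fin n))) (p := fun i => S i = 1)
      have heq : (Finset.univ.filter fun i => ¬ S i = 1)
          = (Finset.univ.filter fun i => S i = 0) := by
        ext i
        rcases hS i with h0 | h0 <;> simp [h0]
      rw [heq, hcard] at hsplit
      simp only [Finset.card_univ, Fintype.card_fin] at hsplit
      omega
    have hzeros : (Finset.univ.filter fun i => S' i = 0)
        = (Finset.univ.filter fun i => S i = 0).erase p := by
      ext i
      simp only [Finset.mem_erase, Finset.mem_filter, Finset.mem_univ, true_and, hS'app i]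
      by_cases h1' : i = q
      · subst h1'; simp [hq, Ne.symm hpq]
      · by_cases h2' : i = p
        · simp [h1', h2']
        · simp [h1', h2']
    refine ⟨?_, ?_, ?_, ?_, ?_, hplt, ?_⟩
    · rw [hstars, Finset.card_pair hpq]
    · rw [hones, Finset.card_erase_of_mem (by simp [hq]), hcard]
    · rw [hzeros, Finset.card_erase_of_mem (by simp [hp]), hzS]
    · intro r hr
      refine ⟨q, ?_, by simp [hS'app]⟩
      rw [hS'app r] at hr
      by_cases h1' : r = q
      · simp [h1'] at hr
      · by_cases h2' : r = p
        · simp [h1', h2'] at hr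
        · simp only [h1', h2', if_false] at hr
          rcases lt_or_gt_of_ne (show r ≠ q from h1') with h | h
          · exact h
          · exact absurd hr (hqmax r h)
    · intro r hr
      refine ⟨p, ?_, by simp [hS'app, hpq]⟩
      rw [hS'app r] at hr
      by_cases h1' : r = q
      · simp [h1'] at hr
      · by_cases h2' : r = p
        · simp [h1', h2'] at hr
        · simp only [h1', h2', if_false] at hr
          rcases lt_or_gt_of_ne (show p ≠ r from fun h => h2' h.symm) with h | h
          · exact h
          · exact absurd hr (hpmin r h)
    · funext i
      simp only [Function.update_apply]
      by_cases h1' : i = q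
      · simp [h1', hq]
      · by_cases h2' : i = p
        · simp [h1', h2', hp, hpq]
        · simp [h1', h2', hS'app]
  · intro T p q hst hones hzeros h1right h0left hp hpmin hq hqmax
    have hpq : p ≠ q := by
      intro h
      subst h
      have : (Finset.univ.filter fun i => T i = 2) = {p} := by
        ext i
        simp only [Finset.mem_filter, Finset.mem_univ, true_and, Finset.mem_singleton]
        constructor
        · intro hi
          by_contra hc
          rcases lt_or_gt_of_ne hc with h | h
          · exact hpmin i h hi
          · exact hqmax i h hi
        · intro h; subst h; exact hp
      rw [this] at hst
      simp at hst
    have hplt : p < q := by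
      rcases lt_or_gt_of_ne hpq with h | h
      · exact h
      · exact (hpmin q h hq).elim
    have hstars : ∀ i, T i = 2 → i = p ∨ i = q := by
      intro i hi
      by_contra hc
      push_neg at hc
      have hsub : ({p, q, i} : Finset (Fin n)) ⊆ Finset.univ.filter fun j => T j = 2 := by
        intro j hj
        simp only [Finset.mem_insert, Finset.mem_singleton] at hj
        rcases hj with h | h | h <;> subst h <;> simp [hp, hq, hi]
      have hcard3 : ({p, q, i} : Finset (Fin n)).card = 3 := by
        rw [Finset.card_insert_of_notMem (by simp [hpq, Ne.symm hc.1]),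
          Finset.card_insert_of_notMem (by simp [Ne.symm hc.2]), Finset.card_singleton]
      have := Finset.card_le_card hsub
      omega
    set S := Function.update (Function.update T p 0) q 1 with hS
    have hSapp : ∀ i, S i = if i = q then 1 else if i = p then 0 else T i := by
      intro i; simp [hS, Function.update_apply]
    have h01 : ∀ i, S i = 0 ∨ S i = 1 := by
      intro i
      rw [hSapp i]
      by_cases h1' : i = q
      · simp [h1']
      · by_cases h2' : i = p
        · simp [h1', h2', hpq]
        · simp only [h1', h2', if_false]
          have : T i ≠ 2 := by
            intro hc
            rcases hstars i hc with h | h <;> [exact h2' h; exact h1' h]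
          revert this
          generalize T i = a
          fin_cases a <;> simp
    refine ⟨h01, ?_, ?_, ?_⟩
    · have honesS : (Finset.univ.filter fun i => S i = 1)
          = insert q (Finset.univ.filter fun i => T i = 1) := by
        ext i
        simp only [Finset.mem_insert, Finset.mem_filter, Finset.mem_univ, true_and, hSapp i]
        by_cases h1' : i = q
        · simp [h1']
        · by_cases h2' : i = p
          · subst h2'; simp [h1', hp]
          · simp [h1', h2']
      rw [honesS, Finset.card_insert_of_notMem (by simp [hq]), hones]
      omega
    · intro hc
      have hSp : S p = 0 := by rw [hSapp]; simp [hpq]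
      have hSq : S q = 1 := by rw [hSapp]; simp
      rw [hc] at hSp hSq
      simp only at hSp hSq
      by_cases hpk : (p : ℕ) < k
      · simp [hpk] at hSp
      · by_cases hqk : (q : ℕ) < k
        · have := Fin.lt_def.mp hplt; omega
        · simp [hqk] at hSq
    · funext i
      simp only [Function.update_apply]
      by_cases h1' : i = q
      · simp [h1', hq]
      · by_cases h2' : i = p
        · simp [h1', h2', hp, Ne.symm hpq]
        · simp [h1', h2', hSapp]
end
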